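/- For every integer n ≥ 1 and every real r with 0 < r < 1, the inequality 4^{n-1}(2-r) r^{2n} / (1+r)^{2n-2} ≤ 1 holds. -/
import Mathlib


theorem stmt8 (n : ℕ) (hn : 1 ≤ n) (r : ℝ) (hr0 : 0 < r) (hr1 : r < 1) :
    (4 : ℝ) ^ (n - 1) * (2 - r) * r ^ (2 * n) / (1 + r) ^ (2 * n - 2) ≤ 1 := by
  obtain ⟨m, rfl⟩ : ∃ m, n = m + 1 := ⟨n - 1, (Nat.succ_pred_eq_of_pos hn).symm⟩
  have h1 : 2 * (m + 1) - 2 = 2 * m := by omega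
  have h2 : 2 * (m + 1) = 2 * m + 2 := by omega
  rw [h1, h2]
  have hd : (0:ℝ) < (1 + r) ^ (2 * m) := by positivity
  rw [div_le_one hd]
  simp only [Nat.add_sub_cancel]
  have key : (4:ℝ) ^ m * (2 - r) * r ^ (2 * m + 2)
      = ((2 - r) * r ^ 2) * ((4 * r ^ 2) ^ m) := by
    rw [pow_add, mul_pow, pow_mul]; ring
  rw [key]
  have h3 : (4 * r ^ 2 : ℝ) ^ m ≤ ((1 + r) ^ 2) ^ m := by
    apply pow_le_pow_left₀ (by positivity)
    nlinarith [sq_nonneg (1 - r)]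
  have h4 : (2 - r) * r ^ 2 ≤ 1 := by nlinarith [mul_nonneg (sub_nonneg.2 hr1.le) (by nlinarith : (0:ℝ) ≤ 1 + r - r^2)]
  calc ((2 - r) * r ^ 2) * ((4 * r ^ 2) ^ m)
      ≤ 1 * ((1 + r) ^ 2) ^ m := by
        apply mul_le_mul h4 h3 (by positivity) (by norm_num)
    _ = (1 + r) ^ (2 * m) := by rw [one_mul, ← pow_mul, mul_comm]
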